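/- For every strictly increasing sequence N_1 < N_2 < N_3 < ... of natural numbers there exists a residual set D ⊂ PW^1_π (the complement of a set of first category in the Banach space PW^1_π) such that limsup_{k→∞} sup_{t∈ℝ} |(S_{N_k} f)(t)| = ∞ for every f ∈ D. In particular, there exists no universal subsequence {N_k} along which the Shannon series converges uniformly on ℝ for every f ∈ PW^1_π. -/

import Mathlib

open MeasureTheory Filter Topology Real Complex
open scoped ENNReal NNReal

noncomputable section

/-- The normalized sinc function `sin(πx)/(πx)` (with value `1` at `x = 0`). -/
def sincπ (x : ℝ) : ℝ := if x = 0 then 1 else Real.sin (π * x) / (π * x)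

/-- `f` belongs to the Paley–Wiener space `PW^p_σ`: it is the inverse Fourier
transform of some `g ∈ L^p([-σ, σ])`. -/
def IsPW (p : ℝ≥0∞) (σ : ℝ) (f : ℂ → ℂ) : Prop :=
  ∃ g : ℝ → ℂ, MemLp g p (volume.restrict (Set.Icc (-σ) σ)) ∧
    ∀ z : ℂ, f z = ((1 / (2 * π) : ℝ) : ℂ) *
      ∫ ω in Set.Icc (-σ) σ, g ω * Complex.exp (Complex.I * (ω : ℂ) * z)

/-- The symmetric partial sum of degree `N` of the Shannon sampling series. -/
def shannonSum (f : ℂ → ℂ) (N : ℕ) (t : ℝ) : ℂ :=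
  ∑ n ∈ Finset.Icc (-(N : ℤ)) (N : ℤ), f (n : ℂ) * ((sincπ (t - n) : ℝ) : ℂ)

/-- The frequency-domain representation of the Banach space `PW^1_π`:
it is isometrically isomorphic to `L^1([-π,π])` via `g ↦ f`,
`f(z) = (1/2π)∫_{-π}^{π} g(ω) e^{iωz} dω`. -/
abbrev PW1Space : Type := Lp ℂ 1 (volume.restrict (Set.Icc (-π) (π : ℝ)))

/-- The Paley–Wiener function in `PW^1_π` attached to `g ∈ L^1([-π,π])`. -/
def pwFun (g : PW1Space) (z : ℂ) : ℂ :=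
  ((1 / (2 * π) : ℝ) : ℂ) * ∫ ω in Set.Icc (-π) π, g ω * Complex.exp (Complex.I * (ω : ℂ) * z)

namespace ShannonAux

local notation "μπ" => (volume.restrict (Set.Icc (-π) (π : ℝ)))

lemma norm_exp_I_mul (ω x : ℝ) : ‖Complex.exp (Complex.I * (ω : ℂ) * (x : ℂ))‖ = 1 := by
  rw [Complex.norm_exp]
  have : (Complex.I * (ω : ℂ) * (x : ℂ)).re = 0 := by simp
  rw [this, Real.exp_zero]

lemma integrable_g_exp (g : PW1Space) (x : ℝ) :
    Integrable (fun ω : ℝ => (g : ℝ → ℂ) ω * Complex.exp (Complex.I * (ω : ℂ) * (x : ℂ))) μπ := by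
  have h1 : Integrable (fun ω : ℝ =>
      Complex.exp (Complex.I * (ω : ℂ) * (x : ℂ)) * (g : ℝ → ℂ) ω) μπ := by
    refine (L1.integrable_coeFn g).bdd_mul ?_ (Eventually.of_forall fun ω => le_of_eq (norm_exp_I_mul ω x))
    refine (Complex.continuous_exp.comp ?_).aestronglyMeasurable
    exact (continuous_const.mul Complex.continuous_ofReal).mul continuous_const
  simpa [mul_comm] using h1

lemma pwFun_add (g h : PW1Space) (x : ℝ) :
    pwFun (g + h) (x : ℂ) = pwFun g (x : ℂ) + pwFun h (x : ℂ) := by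
  unfold pwFun
  rw [← mul_add, ← integral_add (integrable_g_exp g x) (integrable_g_exp h x)]
  congr 1
  refine integral_congr_ae ?_
  filter_upwards [Lp.coeFn_add g h] with ω hω
  rw [hω]; simp [add_mul]

lemma pwFun_smul (a : ℂ) (g : PW1Space) (x : ℝ) :
    pwFun (a • g) (x : ℂ) = a * pwFun g (x : ℂ) := by
  unfold pwFun
  have h_ae : (fun ω : ℝ => (a • g : PW1Space) ω * Complex.exp (Complex.I * (ω:ℂ) * (x:ℂ)))
      =ᵐ[μπ] fun ω : ℝ => a * ((g : ℝ → ℂ) ω * Complex.exp (Complex.I * (ω:ℂ) * (x:ℂ))) := by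
    filter_upwards [Lp.coeFn_smul a g] with ω hω
    rw [hω]; simp; ring
  rw [integral_congr_ae h_ae, integral_const_mul]; ring

lemma pwFun_norm_le (g : PW1Space) (x : ℝ) :
    ‖pwFun g (x : ℂ)‖ ≤ (1 / (2 * π)) * ‖g‖ := by
  have hπ : (0:ℝ) < 2 * π := by positivity
  have h1 : ‖pwFun g (x : ℂ)‖ = (1 / (2*π)) * ‖∫ ω in Set.Icc (-π) π,
      (g : ℝ → ℂ) ω * Complex.exp (Complex.I * (ω : ℂ) * (x : ℂ))‖ := by
    rw [pwFun, norm_mul, Complex.norm_real, Real.norm_eq_abs, abs_of_pos (by positivity)]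
  rw [h1]
  refine mul_le_mul_of_nonneg_left ?_ (by positivity)
  calc ‖∫ ω in Set.Icc (-π) π, (g : ℝ → ℂ) ω * Complex.exp (Complex.I * (ω:ℂ) * (x:ℂ))‖
      ≤ ∫ ω in Set.Icc (-π) π, ‖(g : ℝ → ℂ) ω * Complex.exp (Complex.I * (ω:ℂ) * (x:ℂ))‖ :=
        norm_integral_le_integral_norm _
    _ = ∫ ω in Set.Icc (-π) π, ‖(g : ℝ → ℂ) ω‖ := by
        refine integral_congr_ae (Eventually.of_forall fun ω => ?_)
        simp only [norm_mul, norm_exp_I_mul, mul_one]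
    _ = ‖g‖ := (L1.norm_eq_integral_norm g).symm


/-- Evaluation of the Paley–Wiener function at a real point, as a continuous linear map. -/
def pwEvalL (x : ℝ) : PW1Space →L[ℂ] ℂ :=
  LinearMap.mkContinuous
    { toFun := fun g => pwFun g (x : ℂ)
      map_add' := fun g h => pwFun_add g h x
      map_smul' := fun a g => pwFun_smul a g x }
    (1 / (2 * π)) (fun g => pwFun_norm_le g x)

lemma pwEvalL_apply (x : ℝ) (g : PW1Space) : pwEvalL x g = pwFun g (x : ℂ) := rfl

lemma intCast_eq (n : ℤ) : ((n : ℂ)) = (((n : ℝ) : ℂ)) := by push_cast; rfl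

lemma shannonSum_eq (g : PW1Space) (N : ℕ) (t : ℝ) :
    shannonSum (pwFun g) N t
      = ∑ n ∈ Finset.Icc (-(N : ℤ)) (N : ℤ), pwEvalL ((n : ℝ)) g * ((sincπ (t - n) : ℝ) : ℂ) := by
  unfold shannonSum
  refine Finset.sum_congr rfl fun n _ => ?_
  rw [pwEvalL_apply, intCast_eq]

lemma continuous_shannonSum (N : ℕ) (t : ℝ) :
    Continuous fun g : PW1Space => shannonSum (pwFun g) N t := by
  simp only [shannonSum_eq]
  exact continuous_finset_sum _ fun n _ => ((pwEvalL ((n:ℝ))).continuous.mul continuous_const)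

lemma shannonSum_add (g h : PW1Space) (N : ℕ) (t : ℝ) :
    shannonSum (pwFun (g + h)) N t = shannonSum (pwFun g) N t + shannonSum (pwFun h) N t := by
  simp only [shannonSum_eq, map_add, add_mul, Finset.sum_add_distrib]

lemma shannonSum_smul (a : ℂ) (g : PW1Space) (N : ℕ) (t : ℝ) :
    shannonSum (pwFun (a • g)) N t = a * shannonSum (pwFun g) N t := by
  simp only [shannonSum_eq, _root_.map_smul, smul_eq_mul, Finset.mul_sum, mul_assoc]

lemma abs_sincπ_le (x : ℝ) : |sincπ x| ≤ 1 := by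
  unfold sincπ
  split_ifs with h
  · simp
  · rw [abs_div]
    have h2 : |π * x| ≠ 0 := by
      simp [abs_eq_zero, Real.pi_ne_zero, h]
    rw [div_le_one (lt_of_le_of_ne (abs_nonneg _) (Ne.symm h2))]
    exact Real.abs_sin_le_abs

/-- The sinc value at half-integer offsets. -/
lemma sincπ_half (N : ℕ) (n : ℤ) :
    sincπ ((N : ℝ) + 1/2 - n) = (-1 : ℝ) ^ ((N : ℤ) - n) / (π * ((N : ℝ) + 1/2 - n)) := by
  have hne : (N : ℝ) + 1/2 - n ≠ 0 := by
    intro h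
    have : (n : ℝ) = (N : ℝ) + 1/2 := by linarith
    have h2 : ((2*n : ℤ) : ℝ) = ((2*N+1 : ℤ) : ℝ) := by push_cast; linarith
    have := Int.cast_injective (α := ℝ) h2
    omega
  unfold sincπ
  rw [if_neg hne]
  congr 1
  have hx : π * ((N : ℝ) + 1/2 - n) = ((N : ℤ) - n) * π + π / 2 := by push_cast; ring
  rw [hx, Real.sin_add_pi_div_two]
  have := Real.cos_int_mul_pi_sub 0 ((N : ℤ) - n)
  simpa using this


lemma abs_exp_I_sub_one (y : ℝ) : ‖Complex.exp (Complex.I * (y : ℂ)) - 1‖ ≤ 2 * |y| := by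
  rcases le_or_gt (|y|) 1 with hy | hy
  · have h1 : ‖Complex.I * (y : ℂ)‖ ≤ 1 := by
      simpa [Complex.norm_exp, map_mul] using hy
    have := Complex.norm_exp_sub_one_le h1
    simpa [map_mul] using this
  · have h2 : ‖Complex.exp (Complex.I * (y : ℂ)) - 1‖ ≤ 2 := by
      calc ‖Complex.exp (Complex.I * (y : ℂ)) - 1‖
          ≤ ‖Complex.exp (Complex.I * (y : ℂ))‖ + ‖(1 : ℂ)‖ := norm_sub_le _ _
        _ = 2 := by
            have : ‖Complex.exp (Complex.I * (y : ℂ))‖ = 1 := by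
              simpa using norm_exp_I_mul y 1
            rw [this]; norm_num
    linarith

/-- The width of the frequency window used in the test function. -/
def δf (N : ℕ) : ℝ := 1 / (2 * ((N : ℝ) + 1) ^ 2)

lemma δf_pos (N : ℕ) : 0 < δf N := by unfold δf; positivity

lemma δf_le (N : ℕ) : δf N ≤ 1 / 2 := by
  unfold δf
  rw [div_le_div_iff₀ (by positivity) (by norm_num)]
  nlinarith [Nat.cast_nonneg (α := ℝ) N]

lemma testSet_subset (N : ℕ) : Set.Icc (π - δf N) π ⊆ Set.Icc (-π) π := by
  apply Set.Icc_subset_Icc_left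
  have := δf_le N
  have := Real.pi_gt_three
  linarith

lemma testSet_meas (N : ℕ) : μπ (Set.Icc (π - δf N) π) = ENNReal.ofReal (δf N) := by
  rw [Measure.restrict_apply measurableSet_Icc,
    Set.inter_eq_self_of_subset_left (testSet_subset N), Real.volume_Icc]
  congr 1; ring

/-- The test function: normalized indicator of a small window at the right endpoint. -/
def testFun (N : ℕ) : PW1Space :=
  indicatorConstLp 1 measurableSet_Icc
    (by rw [testSet_meas N]; exact ENNReal.ofReal_ne_top) (((δf N)⁻¹ : ℝ) : ℂ)

lemma norm_testFun (N : ℕ) : ‖testFun N‖ = 1 := by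
  rw [testFun, norm_indicatorConstLp one_ne_zero ENNReal.one_ne_top, measureReal_def, testSet_meas]
  have h0 : 0 < δf N := δf_pos N
  rw [ENNReal.toReal_ofReal h0.le, ENNReal.toReal_one]
  norm_num
  rw [abs_of_pos h0]
  field_simp


lemma exp_I_pi_int (n : ℤ) : Complex.exp (Complex.I * (π : ℂ) * (n : ℂ)) = (-1 : ℂ) ^ n := by
  have h : Complex.I * (π : ℂ) * (n : ℂ) = (n : ℂ) * ((π : ℂ) * Complex.I) := by ring
  rw [h, Complex.exp_int_mul, Complex.exp_pi_mul_I]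

lemma pwFun_testFun_sub (N : ℕ) (n : ℤ) :
    ‖pwFun (testFun N) (((n : ℝ) : ℂ)) - ((1 / (2 * π) : ℝ) : ℂ) * (-1 : ℂ) ^ n‖
      ≤ δf N * |(n : ℝ)| := by
  set δ := δf N with hδdef
  have hδ : 0 < δ := δf_pos N
  set s : Set ℝ := Set.Icc (π - δ) π with hsdef
  set c : ℂ := (((δ)⁻¹ : ℝ) : ℂ) with hcdef
  set K : ℝ → ℂ := fun ω => Complex.exp (Complex.I * (ω : ℂ) * ((n : ℝ) : ℂ)) with hKdef
  set E : ℂ := Complex.exp (Complex.I * (π : ℂ) * ((n : ℝ) : ℂ)) with hEdef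
  have hvols : (volume s).toReal = δ := by
    rw [hsdef, Real.volume_Icc]
    rw [ENNReal.toReal_ofReal (by linarith)]
    ring
  -- Step 1: rewrite the Paley–Wiener integral as an integral over s
  have h_ae : (fun ω : ℝ => (testFun N : ℝ → ℂ) ω * K ω)
      =ᵐ[μπ] fun ω : ℝ => s.indicator (fun ω => c * K ω) ω := by
    have hcoe : ⇑(testFun N) =ᵐ[μπ] (Set.Icc (π - δf N) π).indicator fun _ => c :=
      indicatorConstLp_coeFn
    filter_upwards [hcoe] with ω hω
    rw [show (testFun N : ℝ → ℂ) ω = s.indicator (fun _ => c) ω from hω]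
    by_cases hmem : ω ∈ s
    · simp [hmem]
    · simp [hmem]
  have hA : pwFun (testFun N) (((n : ℝ) : ℂ))
      = ((1 / (2 * π) : ℝ) : ℂ) * ∫ ω in s, c * K ω := by
    unfold pwFun
    congr 1
    rw [integral_congr_ae h_ae, integral_indicator measurableSet_Icc,
      Measure.restrict_restrict measurableSet_Icc,
      Set.inter_eq_self_of_subset_left (testSet_subset N)]
  -- Step 2: the model value
  have hcE : ((volume s).toReal : ℝ) • (c * E) = (-1 : ℂ) ^ n := by
    rw [hvols, real_smul, hcdef, hEdef]
    rw [show ((n : ℝ) : ℂ) = (n : ℂ) from Complex.ofReal_intCast n, exp_I_pi_int]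
    rw [← mul_assoc, ← Complex.ofReal_mul, mul_inv_cancel₀ (ne_of_gt hδ), Complex.ofReal_one,
      one_mul]
  have hB : ((1 / (2 * π) : ℝ) : ℂ) * (-1 : ℂ) ^ n
      = ((1 / (2 * π) : ℝ) : ℂ) * ∫ ω in s, c * E := by
    rw [setIntegral_const, measureReal_def, hcE]
  -- Step 3: integrability on s
  have hKcont : Continuous fun ω : ℝ => c * K ω := by
    refine continuous_const.mul (Complex.continuous_exp.comp ?_)
    exact (continuous_const.mul Complex.continuous_ofReal).mul continuous_const
  have hKint : IntegrableOn (fun ω => c * K ω) s volume :=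
    show IntegrableOn _ (Set.Icc (π - δ) π) volume from hKcont.integrableOn_Icc
  have hEint : IntegrableOn (fun _ : ℝ => c * E) s volume := integrableOn_const
    (by rw [hsdef, Real.volume_Icc]; exact ENNReal.ofReal_ne_top)
  -- Step 4: the difference
  rw [hA, hB, ← mul_sub, ← integral_sub hKint hEint]
  rw [norm_mul]
  have hnc : ‖((1 / (2 * π) : ℝ) : ℂ)‖ = 1 / (2 * π) := by
    rw [Complex.norm_real, Real.norm_eq_abs, abs_of_pos (by positivity)]
  rw [hnc]
  have hbound : ∀ ω ∈ s, ‖c * K ω - c * E‖ ≤ δ⁻¹ * (2 * (δ * |(n : ℝ)|)) := by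
    intro ω hω
    rw [← mul_sub, norm_mul]
    have hc : ‖c‖ = δ⁻¹ := by
      rw [hcdef, Complex.norm_real, Real.norm_eq_abs, abs_of_pos (inv_pos.mpr hδ)]
    rw [hc]
    refine mul_le_mul_of_nonneg_left ?_ (by positivity)
    -- ‖K ω - E‖ ≤ 2 * (δ * |n|)
    have hfact : K ω - E = E * (Complex.exp (Complex.I * (((ω - π) * (n : ℝ) : ℝ) : ℂ)) - 1) := by
      rw [mul_sub, mul_one, hKdef, hEdef, ← Complex.exp_add]
      congr 1
      push_cast
      ring
    rw [hfact, norm_mul]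
    have hEnorm : ‖E‖ = 1 := norm_exp_I_mul π (n : ℝ)
    rw [hEnorm, one_mul]
    refine le_trans (abs_exp_I_sub_one _) ?_
    rw [abs_mul]
    have hωd : |ω - π| ≤ δ := by
      rw [abs_le]
      obtain ⟨h1, h2⟩ := hω
      constructor <;> [linarith; linarith]
    have := mul_le_mul_of_nonneg_right hωd (abs_nonneg (n : ℝ))
    linarith
  have hμs : volume s < ∞ := by
    rw [hsdef, Real.volume_Icc]; exact ENNReal.ofReal_lt_top
  have := norm_setIntegral_le_of_norm_le_const (μ := volume) hμs hbound
  calc (1 / (2 * π)) * ‖∫ ω in s, (c * K ω - c * E)‖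
      ≤ (1 / (2 * π)) * (δ⁻¹ * (2 * (δ * |(n : ℝ)|)) * (volume s).toReal) := by
        refine mul_le_mul_of_nonneg_left ?_ (by positivity)
        exact le_trans this (le_of_eq (by rw [measureReal_def]))
    _ = δ * |(n : ℝ)| / π := by
        rw [hvols]
        field_simp
    _ ≤ δ * |(n : ℝ)| := by
        rw [div_le_iff₀ (by positivity)]
        nlinarith [Real.pi_gt_three, mul_nonneg hδ.le (abs_nonneg (n:ℝ))]


lemma sum_reindex (N : ℕ) :
    ∑ i ∈ Finset.range (2*N+1), (1:ℝ)/((i:ℝ)+1)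
      ≤ ∑ n ∈ Finset.Icc (-(N:ℤ)) (N:ℤ), 1/((N:ℝ)+1/2-(n:ℝ)) := by
  have h1 : ∑ n ∈ Finset.Icc (-(N:ℤ)) (N:ℤ), (1:ℝ)/((N:ℝ)+1/2-(n:ℝ))
      = ∑ i ∈ Finset.range (2*N+1), (1:ℝ)/((i:ℝ)+1/2) := by
    refine Finset.sum_nbij' (fun n => ((N:ℤ) - n).toNat) (fun i => (N:ℤ) - (i:ℤ))
      ?_ ?_ ?_ ?_ ?_
    · intro n hn
      rw [Finset.mem_Icc] at hn
      rw [Finset.mem_range]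
      omega
    · intro i hi
      rw [Finset.mem_range] at hi
      rw [Finset.mem_Icc]
      omega
    · intro n hn
      rw [Finset.mem_Icc] at hn
      omega
    · intro i hi
      rw [Finset.mem_range] at hi
      omega
    · intro n hn
      rw [Finset.mem_Icc] at hn
      congr 1
      have h2 : ((((N:ℤ) - n).toNat : ℤ) : ℝ) = ((N:ℤ) - n : ℤ) := by
        congr 1
        omega
      push_cast at h2 ⊢
      linarith
  rw [h1]
  apply Finset.sum_le_sum
  intro i _
  have hpos : (0:ℝ) < (i:ℝ) + 1/2 := by positivity
  apply one_div_le_one_div_of_le hpos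
  linarith

lemma key_estimate (N : ℕ) :
    (1/(2*π^2)) * (∑ i ∈ Finset.range (2*N+1), (1:ℝ)/((i:ℝ)+1)) - 1
      ≤ ‖shannonSum (pwFun (testFun N)) N ((N:ℝ) + 1/2)‖ := by
  have hπ := Real.pi_gt_three
  set t₀ : ℝ := (N:ℝ) + 1/2 with ht₀
  set S : ℂ := shannonSum (pwFun (testFun N)) N t₀ with hSdef
  set M : ℂ := ∑ n ∈ Finset.Icc (-(N:ℤ)) (N:ℤ),
    ((1/(2*π) : ℝ) : ℂ) * (-1:ℂ)^n * ((sincπ (t₀ - (n:ℝ)) : ℝ) : ℂ) with hMdef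
  have hS : S = ∑ n ∈ Finset.Icc (-(N:ℤ)) (N:ℤ),
      pwFun (testFun N) (((n:ℝ):ℂ)) * ((sincπ (t₀ - (n:ℝ)) : ℝ) : ℂ) := by
    rw [hSdef]
    unfold shannonSum
    exact Finset.sum_congr rfl fun n _ => by rw [intCast_eq]
  -- error bound
  have hcard : (Finset.Icc (-(N:ℤ)) (N:ℤ)).card = 2*N+1 := by
    rw [Int.card_Icc]
    omega
  have hSM : ‖S - M‖ ≤ 1 := by
    have hdiff : S - M = ∑ n ∈ Finset.Icc (-(N:ℤ)) (N:ℤ),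
        (pwFun (testFun N) (((n:ℝ):ℂ)) - ((1/(2*π) : ℝ):ℂ) * (-1:ℂ)^n)
          * ((sincπ (t₀ - (n:ℝ)) : ℝ):ℂ) := by
      rw [hS, hMdef, ← Finset.sum_sub_distrib]
      exact Finset.sum_congr rfl fun n _ => by ring
    rw [hdiff]
    calc ‖∑ n ∈ Finset.Icc (-(N:ℤ)) (N:ℤ),
        (pwFun (testFun N) (((n:ℝ):ℂ)) - ((1/(2*π) : ℝ):ℂ) * (-1:ℂ)^n)
          * ((sincπ (t₀ - (n:ℝ)) : ℝ):ℂ)‖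
        ≤ ∑ n ∈ Finset.Icc (-(N:ℤ)) (N:ℤ),
          ‖(pwFun (testFun N) (((n:ℝ):ℂ)) - ((1/(2*π) : ℝ):ℂ) * (-1:ℂ)^n)
            * ((sincπ (t₀ - (n:ℝ)) : ℝ):ℂ)‖ := norm_sum_le _ _
      _ ≤ ∑ _n ∈ Finset.Icc (-(N:ℤ)) (N:ℤ), δf N * (N:ℝ) := by
          refine Finset.sum_le_sum fun n hn => ?_
          rw [Finset.mem_Icc] at hn
          rw [norm_mul]
          have h1 := pwFun_testFun_sub N n
          have h2 : ‖((sincπ (t₀ - (n:ℝ)) : ℝ):ℂ)‖ ≤ 1 := by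
            rw [Complex.norm_real, Real.norm_eq_abs]
            exact abs_sincπ_le _
          have h3 : |(n:ℝ)| ≤ (N:ℝ) := by
            rw [abs_le]
            constructor <;> [exact_mod_cast hn.1; exact_mod_cast hn.2]
          have h4 : ‖pwFun (testFun N) (((n:ℝ):ℂ)) - ((1/(2*π) : ℝ):ℂ) * (-1:ℂ)^n‖
              ≤ δf N * (N:ℝ) := le_trans h1 (by
                have := (δf_pos N).le
                nlinarith)
          calc ‖pwFun (testFun N) (((n:ℝ):ℂ)) - ((1/(2*π) : ℝ):ℂ) * (-1:ℂ)^n‖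
                * ‖((sincπ (t₀ - (n:ℝ)) : ℝ):ℂ)‖
              ≤ (δf N * (N:ℝ)) * 1 := by
                refine mul_le_mul h4 h2 (norm_nonneg _) (mul_nonneg (δf_pos N).le (Nat.cast_nonneg N))
            _ = δf N * (N:ℝ) := by ring
      _ = (2*(N:ℝ)+1) * (δf N * (N:ℝ)) := by
          rw [Finset.sum_const, hcard, nsmul_eq_mul]
          push_cast
          ring
      _ ≤ 1 := by
          unfold δf
          have h0 : (0:ℝ) < 2*((N:ℝ)+1)^2 := by positivity
          have hN : (0:ℝ) ≤ (N:ℝ) := Nat.cast_nonneg N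
          rw [show (2*(N:ℝ)+1) * (1/(2*((N:ℝ)+1)^2) * (N:ℝ))
              = ((2*(N:ℝ)+1)*(N:ℝ))/(2*((N:ℝ)+1)^2) by ring,
            div_le_one h0]
          nlinarith
  -- main term
  have hpos : ∀ n ∈ Finset.Icc (-(N:ℤ)) (N:ℤ), (0:ℝ) < t₀ - (n:ℝ) := by
    intro n hn
    rw [Finset.mem_Icc] at hn
    have : (n:ℝ) ≤ (N:ℝ) := by exact_mod_cast hn.2
    rw [ht₀]; linarith
  have hM2 : M = (-1:ℂ)^(N:ℤ) * ((1/(2*π) : ℝ):ℂ)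
      * (((∑ n ∈ Finset.Icc (-(N:ℤ)) (N:ℤ), 1/(π*(t₀ - (n:ℝ)))) : ℝ) : ℂ) := by
    rw [hMdef, Complex.ofReal_sum, Finset.mul_sum]
    refine Finset.sum_congr rfl fun n hn => ?_
    rw [sincπ_half N n]
    have hne : (-1 : ℂ) ≠ 0 := by norm_num
    push_cast
    have hz : (-1:ℂ)^n * (-1:ℂ)^((N:ℤ) - n) = (-1:ℂ)^(N:ℤ) := by
      rw [← zpow_add₀ hne]
      congr 1
      ring
    rw [show ((t₀:ℝ):ℂ) = (N:ℂ) + 1/2 by rw [ht₀]; push_cast; ring]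
    rw [← hz]
    ring
  -- lower bound for the main term
  have hsum_nonneg : ∀ n ∈ Finset.Icc (-(N:ℤ)) (N:ℤ), (0:ℝ) ≤ 1/(π*(t₀ - (n:ℝ))) := by
    intro n hn
    have := hpos n hn
    positivity
  have hMnorm : (1/(2*π^2)) * (∑ i ∈ Finset.range (2*N+1), (1:ℝ)/((i:ℝ)+1)) ≤ ‖M‖ := by
    rw [hM2, norm_mul, norm_mul]
    have h1 : ‖(-1:ℂ)^(N:ℤ)‖ = 1 := by
      rw [norm_zpow, norm_neg, norm_one, one_zpow]
    have h2 : ‖((1/(2*π) : ℝ):ℂ)‖ = 1/(2*π) := by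
      rw [Complex.norm_real, Real.norm_eq_abs, abs_of_pos (by positivity)]
    rw [h1, h2, one_mul, Complex.norm_real, Real.norm_eq_abs,
      _root_.abs_of_nonneg (Finset.sum_nonneg hsum_nonneg)]
    have h3 : ∑ n ∈ Finset.Icc (-(N:ℤ)) (N:ℤ), 1/(π*(t₀ - (n:ℝ)))
        = (1/π) * ∑ n ∈ Finset.Icc (-(N:ℤ)) (N:ℤ), 1/(t₀ - (n:ℝ)) := by
      rw [Finset.mul_sum]
      exact Finset.sum_congr rfl fun n _ => by rw [one_div, mul_inv, ← one_div, ← one_div]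
    rw [h3, ht₀]
    have h4 := sum_reindex N
    rw [show (1:ℝ)/(2*π) * ((1/π) * ∑ n ∈ Finset.Icc (-(N:ℤ)) (N:ℤ), 1/((N:ℝ)+1/2 - (n:ℝ)))
        = (1/(2*π^2)) * ∑ n ∈ Finset.Icc (-(N:ℤ)) (N:ℤ), 1/((N:ℝ)+1/2 - (n:ℝ)) by
      ring]
    exact mul_le_mul_of_nonneg_left h4 (by positivity)
  have hfin := norm_sub_norm_le M S
  rw [norm_sub_rev] at hfin
  linarith


/-- Lower bound for the operator at the test function. -/
def bnd (M : ℕ) : ℝ := (1/(2*π^2)) * (∑ i ∈ Finset.range (2*M+1), (1:ℝ)/((i:ℝ)+1)) - 1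

lemma bnd_key (M : ℕ) : bnd M ≤ ‖shannonSum (pwFun (testFun M)) M ((M:ℝ) + 1/2)‖ :=
  key_estimate M

lemma tendsto_bnd : Tendsto bnd atTop atTop := by
  have h1 : Tendsto (fun n : ℕ => ∑ i ∈ Finset.range n, (1:ℝ)/((i:ℝ)+1)) atTop atTop := by
    have := Real.tendsto_sum_range_one_div_nat_succ_atTop
    simpa using this
  have h2 : Tendsto (fun M : ℕ => 2*M+1) atTop atTop := by
    refine tendsto_atTop_mono (fun M => ?_) tendsto_id
    simp only [id_eq]
    omega
  have h3 := h1.comp h2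
  have h4 := h3.const_mul_atTop (show (0:ℝ) < 1/(2*π^2) by positivity)
  exact tendsto_atTop_add_const_right _ (-1) h4

lemma main_residual (Nk : ℕ → ℕ) (hNk : StrictMono Nk) :
    ∃ D : Set PW1Space, D ∈ residual PW1Space ∧ ∀ g ∈ D,
      limsup (fun k : ℕ => ⨆ t : ℝ, (‖shannonSum (pwFun g) (Nk k) t‖₊ : ℝ≥0∞)) atTop = ⊤ := by
  classical
  set C : ℕ → ℕ → Set PW1Space := fun c m =>
    {g | ∀ k, m ≤ k → ∀ t : ℝ, ‖shannonSum (pwFun g) (Nk k) t‖ ≤ c} with hC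
  have hclosed : ∀ c m, IsClosed (C c m) := by
    intro c m
    have hrw : C c m = ⋂ (k : ℕ), ⋂ (t : ℝ),
        {g : PW1Space | m ≤ k → ‖shannonSum (pwFun g) (Nk k) t‖ ≤ c} := by
      ext g
      simp only [hC, Set.mem_iInter, Set.mem_setOf_eq]
      exact ⟨fun h k t hk => h k hk t, fun h k hk t => h k t hk⟩
    rw [hrw]
    refine isClosed_iInter fun k => isClosed_iInter fun t => ?_
    by_cases hk : m ≤ k
    · have : {g : PW1Space | m ≤ k → ‖shannonSum (pwFun g) (Nk k) t‖ ≤ c}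
          = {g : PW1Space | ‖shannonSum (pwFun g) (Nk k) t‖ ≤ (c : ℝ)} := by
        ext g; simp [hk]
      rw [this]
      exact isClosed_le ((continuous_shannonSum (Nk k) t).norm) continuous_const
    · have : {g : PW1Space | m ≤ k → ‖shannonSum (pwFun g) (Nk k) t‖ ≤ c} = Set.univ := by
        ext g; simp [hk]
      rw [this]
      exact isClosed_univ
  have hempty : ∀ c m, interior (C c m) = ∅ := by
    intro c m
    rw [Set.eq_empty_iff_forall_notMem]
    intro g0 hg0
    rw [mem_interior_iff_mem_nhds, Metric.mem_nhds_iff] at hg0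
    obtain ⟨ε, hε, hball⟩ := hg0
    have hb : ∀ k, m ≤ k → ∀ h : PW1Space, ‖h‖ ≤ 1 → ∀ t : ℝ,
        ‖shannonSum (pwFun h) (Nk k) t‖ ≤ 4*c/ε := by
      intro k hk h hh t
      have hmem : g0 + (((ε/2 : ℝ)) : ℂ) • h ∈ Metric.ball g0 ε := by
        rw [Metric.mem_ball, dist_eq_norm, add_sub_cancel_left, norm_smul]
        have hc2 : ‖(((ε/2 : ℝ)) : ℂ)‖ = ε/2 := by
          rw [Complex.norm_real, Real.norm_eq_abs, abs_of_pos (by linarith)]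
        calc ‖(((ε/2 : ℝ)) : ℂ)‖ * ‖h‖ ≤ (ε/2) * 1 := by
              rw [hc2]
              exact mul_le_mul le_rfl hh (norm_nonneg _) (by linarith)
          _ < ε := by linarith
      have h1 := hball hmem k hk t
      have h0 := hball (Metric.mem_ball_self hε) k hk t
      have hrel : (((ε/2 : ℝ)) : ℂ) * shannonSum (pwFun h) (Nk k) t
          = shannonSum (pwFun (g0 + (((ε/2 : ℝ)) : ℂ) • h)) (Nk k) t
            - shannonSum (pwFun g0) (Nk k) t := by
        rw [shannonSum_add, shannonSum_smul]
        ring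
      have h2 : ‖(((ε/2 : ℝ)) : ℂ) * shannonSum (pwFun h) (Nk k) t‖ ≤ 2*c := by
        rw [hrel]
        calc ‖shannonSum (pwFun (g0 + (((ε/2 : ℝ)) : ℂ) • h)) (Nk k) t
              - shannonSum (pwFun g0) (Nk k) t‖
            ≤ ‖shannonSum (pwFun (g0 + (((ε/2 : ℝ)) : ℂ) • h)) (Nk k) t‖
              + ‖shannonSum (pwFun g0) (Nk k) t‖ := norm_sub_le _ _
          _ ≤ 2*c := by linarith
      rw [norm_mul] at h2
      have hc2 : ‖(((ε/2 : ℝ)) : ℂ)‖ = ε/2 := by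
        rw [Complex.norm_real, Real.norm_eq_abs, abs_of_pos (by linarith)]
      rw [hc2] at h2
      rw [le_div_iff₀ hε]
      nlinarith [norm_nonneg (shannonSum (pwFun h) (Nk k) t)]
    have htend : Tendsto (fun k => bnd (Nk k)) atTop atTop :=
      tendsto_bnd.comp hNk.tendsto_atTop
    obtain ⟨k, hk1, hk2⟩ := ((htend.eventually_gt_atTop (4*c/ε)).and
      (eventually_ge_atTop m)).exists
    have hkey := bnd_key (Nk k)
    have hcontr := hb k hk2 (testFun (Nk k)) (norm_testFun (Nk k)).le (((Nk k : ℕ) : ℝ) + 1/2)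
    linarith
  refine ⟨⋂ (c : ℕ), ⋂ (m : ℕ), (C c m)ᶜ, ?_, ?_⟩
  · refine (countable_iInter_mem).mpr fun c => (countable_iInter_mem).mpr fun m => ?_
    exact residual_of_dense_open (hclosed c m).isOpen_compl
      (interior_eq_empty_iff_dense_compl.mp (hempty c m))
  · intro g hg
    simp only [Set.mem_iInter, Set.mem_compl_iff, hC, Set.mem_setOf_eq, not_forall, not_le] at hg
    rw [limsup_eq_iInf_iSup_of_nat]
    refine iInf_eq_top.mpr fun m => ?_
    by_contra hne
    obtain ⟨c, hc⟩ := ENNReal.exists_nat_gt hne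
    obtain ⟨k, hk, t, ht⟩ := hg c m
    have hle : (c : ℝ≥0∞) ≤ ⨆ i, ⨆ (_ : m ≤ i), ⨆ t : ℝ, (‖shannonSum (pwFun g) (Nk i) t‖₊ : ℝ≥0∞) := by
      have h1 : (c : ℝ≥0∞) ≤ (‖shannonSum (pwFun g) (Nk k) t‖₊ : ℝ≥0∞) := by
        have : (c : ℝ) ≤ ‖shannonSum (pwFun g) (Nk k) t‖ := ht.le
        exact_mod_cast this
      refine le_trans h1 ?_
      refine le_trans (le_iSup (fun t : ℝ => (‖shannonSum (pwFun g) (Nk k) t‖₊ : ℝ≥0∞)) t) ?_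
      exact le_iSup₂ (f := fun i (_ : m ≤ i) =>
        ⨆ t : ℝ, (‖shannonSum (pwFun g) (Nk i) t‖₊ : ℝ≥0∞)) k hk
    exact absurd hle (not_le.mpr hc)

end ShannonAux

/-- For every strictly increasing sequence `N_1 < N_2 < ⋯` of
naturals there is a residual set `D` in the Banach space `PW^1_π` such that
`limsup_k sup_{t∈ℝ} |(S_{N_k} f)(t)| = ∞` for every `f ∈ D`.  In particular no
universal subsequence yields uniform convergence on `ℝ` for every `f ∈ PW^1_π`. -/
theorem shannon_divergence_residual_along_subsequences
    (Nk : ℕ → ℕ) (hNk : StrictMono Nk) :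
    (∃ D : Set PW1Space, D ∈ residual PW1Space ∧ ∀ g ∈ D,
        limsup (fun k : ℕ => ⨆ t : ℝ, (‖shannonSum (pwFun g) (Nk k) t‖₊ : ℝ≥0∞)) atTop = ⊤) ∧
    ¬ ∃ Mk : ℕ → ℕ, StrictMono Mk ∧ ∀ g : PW1Space,
        Tendsto (fun k : ℕ => ⨆ t : ℝ, (‖pwFun g (t : ℂ) - shannonSum (pwFun g) (Mk k) t‖₊ : ℝ≥0∞))
          atTop (𝓝 0) := by
  constructor
  · exact ShannonAux.main_residual Nk hNk
  · rintro ⟨Mk, hMk, hconv⟩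
    obtain ⟨D, hD, hdiv⟩ := ShannonAux.main_residual Mk hMk
    have hne : Nonempty PW1Space := ⟨0⟩
    obtain ⟨g, hg⟩ := (dense_of_mem_residual hD).nonempty
    have hlim := hdiv g hg
    have hconvg := hconv g
    set Cg : ℝ≥0∞ := ENNReal.ofReal ((1/(2*π)) * ‖g‖) with hCg
    have hpw : ∀ t : ℝ, (‖pwFun g (t : ℂ)‖₊ : ℝ≥0∞) ≤ Cg := by
      intro t
      rw [← ENNReal.ofReal_coe_nnreal, coe_nnnorm, hCg]
      exact ENNReal.ofReal_le_ofReal (ShannonAux.pwFun_norm_le g t)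
    have hev : ∀ᶠ k in atTop,
        (⨆ t : ℝ, (‖pwFun g (t : ℂ) - shannonSum (pwFun g) (Mk k) t‖₊ : ℝ≥0∞)) < 1 := by
      exact hconvg.eventually_lt_const (by norm_num)
    have hev2 : ∀ᶠ k in atTop,
        (⨆ t : ℝ, (‖shannonSum (pwFun g) (Mk k) t‖₊ : ℝ≥0∞)) ≤ 1 + Cg := by
      filter_upwards [hev] with k hk
      refine iSup_le fun t => ?_
      have h1 : shannonSum (pwFun g) (Mk k) t
          = pwFun g (t : ℂ) - (pwFun g (t : ℂ) - shannonSum (pwFun g) (Mk k) t) := by ring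
      have h2 := nnnorm_sub_le (pwFun g (t : ℂ))
        (pwFun g (t : ℂ) - shannonSum (pwFun g) (Mk k) t)
      rw [← h1] at h2
      calc (‖shannonSum (pwFun g) (Mk k) t‖₊ : ℝ≥0∞)
          ≤ (‖pwFun g (t : ℂ)‖₊ : ℝ≥0∞)
            + (‖pwFun g (t : ℂ) - shannonSum (pwFun g) (Mk k) t‖₊ : ℝ≥0∞) := by
            exact_mod_cast h2
        _ ≤ Cg + 1 := by
            refine add_le_add (hpw t) ?_
            refine le_trans ?_ hk.le
            exact le_iSup (fun t : ℝ =>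
              (‖pwFun g (t : ℂ) - shannonSum (pwFun g) (Mk k) t‖₊ : ℝ≥0∞)) t
        _ = 1 + Cg := add_comm _ _
    have hlimle : limsup (fun k : ℕ =>
        ⨆ t : ℝ, (‖shannonSum (pwFun g) (Mk k) t‖₊ : ℝ≥0∞)) atTop ≤ 1 + Cg :=
      limsup_le_of_le (by isBoundedDefault) hev2
    rw [hlim] at hlimle
    have : (1 : ℝ≥0∞) + Cg < ⊤ := by
      rw [hCg]
      exact ENNReal.add_lt_top.mpr ⟨ENNReal.one_lt_top, ENNReal.ofReal_lt_top⟩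
    exact absurd hlimle (by simpa using this.ne)
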